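/- Let n ≥ 2 and r > 0 with r² ∈ ℕ. Let Q_r = {q ∈ ℤ^n : ‖q‖² = r² and q is lexicographically positive (its first nonzero coordinate is positive)}. Then Σ_{q ∈ Q_r} q qᵀ = β(r) I_n, where β(r) = (r² / n) · |Q_r|. -/

import Mathlib

/-- `q` is lexicographically positive: its first nonzero coordinate is positive. -/
def LexPos {n : ℕ} (q : Fin n → ℤ) : Prop :=
  ∃ i : Fin n, 0 < q i ∧ ∀ j : Fin n, j < i → q j = 0

lemma not_lexpos_neg {n : ℕ} {q : Fin n → ℤ} (hq : LexPos q) : ¬ LexPos (-q) := by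
  obtain ⟨i, hi, h0⟩ := hq
  rintro ⟨i', hi', h0'⟩
  simp only [Pi.neg_apply] at hi' h0'
  rcases lt_trichotomy i i' with h | h | h
  · have := h0' i h; omega
  · subst h; omega
  · have := h0 i' h; omega

lemma lexpos_or_neg {n : ℕ} {q : Fin n → ℤ} (hq : q ≠ 0) : LexPos q ∨ LexPos (-q) := by
  classical
  have hne : (Finset.univ.filter (fun i => q i ≠ 0)).Nonempty := by
    by_contra h
    apply hq
    rw [Finset.not_nonempty_iff_eq_empty, Finset.filter_eq_empty_iff] at h
    ext i
    simpa using h (Finset.mem_univ i)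
  set T := Finset.univ.filter (fun i => q i ≠ 0) with hT
  set i := T.min' hne with hidef
  have hiT : i ∈ T := T.min'_mem hne
  have hiq : q i ≠ 0 := by simpa [hT] using hiT
  have hz : ∀ j, j < i → q j = 0 := by
    intro j hj
    by_contra hjq
    have : i ≤ j := T.min'_le j (by simp [hT, hjq])
    exact absurd hj (not_lt.mpr this)
  rcases hiq.lt_or_gt with h | h
  · right
    exact ⟨i, by simpa using h, fun j hj => by simp [hz j hj]⟩
  · left
    exact ⟨i, h, hz⟩

theorem sum_outer_products_isotropic
    (n : ℕ) (hn : 2 ≤ n) (r : ℝ) (hr : 0 < r) (m : ℕ) (hm : r ^ 2 = (m : ℝ))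
    (Q : Finset (Fin n → ℤ))
    (hQ : ∀ q : Fin n → ℤ, q ∈ Q ↔ (∑ i, (q i) ^ 2 = (m : ℤ)) ∧ LexPos q) :
    ∑ q ∈ Q, (Matrix.of fun k j : Fin n => ((q k : ℝ) * (q j : ℝ)))
      = (((m : ℝ) / n) * Q.card) • (1 : Matrix (Fin n) (Fin n) ℝ) := by
  classical
  have hn0 : (n : ℝ) ≠ 0 := by
    have : (0:ℕ) < n := by omega
    exact_mod_cast this.ne'
  have hm1 : 1 ≤ m := by
    by_contra h
    have : m = 0 := by omega
    subst this
    simp at hm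
    nlinarith
  -- S : all vectors of squared norm m
  set N : (Fin n → ℤ) → (Fin n → ℤ) := fun q => -q with hNdef
  have hNinj : Function.Injective N := fun a b h => by
    simpa [hNdef] using congrArg Neg.neg h
  set S := Q ∪ Q.image N with hSdef
  have hdisj : Disjoint Q (Q.image N) := by
    rw [Finset.disjoint_left]
    intro q hq hq'
    obtain ⟨p, hp, rfl⟩ := Finset.mem_image.mp hq'
    exact not_lexpos_neg ((hQ p).mp hp).2 ((hQ (N p)).mp hq).2
  have hS : ∀ q, q ∈ S ↔ ∑ i, (q i) ^ 2 = (m : ℤ) := by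
    intro q
    constructor
    · intro h
      rcases Finset.mem_union.mp h with h | h
      · exact ((hQ q).mp h).1
      · obtain ⟨p, hp, rfl⟩ := Finset.mem_image.mp h
        simpa [hNdef] using ((hQ p).mp hp).1
    · intro h
      have hq0 : q ≠ 0 := by
        rintro rfl
        simp at h
        omega
      rcases lexpos_or_neg hq0 with hl | hl
      · exact Finset.mem_union_left _ ((hQ q).mpr ⟨h, hl⟩)
      · refine Finset.mem_union_right _ (Finset.mem_image.mpr ⟨-q, ?_, by simp [hNdef]⟩)
        refine (hQ (-q)).mpr ⟨?_, hl⟩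
        simpa using h
  have hcardS : S.card = 2 * Q.card := by
    rw [hSdef, Finset.card_union_of_disjoint hdisj,
      Finset.card_image_of_injective _ hNinj]
    ring
  -- sums of even functions over S double the sum over Q
  have hsum2 : ∀ f : (Fin n → ℤ) → ℤ, (∀ q, f (-q) = f q) →
      ∑ q ∈ S, f q = 2 * ∑ q ∈ Q, f q := by
    intro f hf
    rw [hSdef, Finset.sum_union hdisj,
      Finset.sum_image (fun a _ b _ h => hNinj h)]
    simp only [hNdef, hf]
    ring
  -- off-diagonal sums vanish
  have hoff : ∀ k j : Fin n, k ≠ j → ∑ q ∈ S, q k * q j = 0 := by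
    intro k j hkj
    refine Finset.sum_involution (fun q _ => Function.update q k (-(q k))) ?_ ?_ ?_ ?_
    · intro q _
      simp [Function.update_of_ne (Ne.symm hkj)]
    · intro q _ hfq heq
      apply hfq
      have := congrFun heq k
      simp at this
      have hqk : q k = 0 := by omega
      simp [hqk]
    · intro q hq
      rw [hS] at hq ⊢
      rw [← hq]
      refine Finset.sum_congr rfl fun i _ => ?_
      by_cases h : i = k
      · subst h; simp
      · simp [Function.update_of_ne h]
    · intro q _
      ext i
      by_cases h : i = k
      · subst h; simp
      · simp [Function.update_of_ne h]
  -- diagonal sums are all equal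
  have hdiag : ∀ k j : Fin n, ∑ q ∈ S, (q k) ^ 2 = ∑ q ∈ S, (q j) ^ 2 := by
    intro k j
    refine Finset.sum_nbij' (fun q => q ∘ Equiv.swap k j) (fun q => q ∘ Equiv.swap k j)
      ?_ ?_ ?_ ?_ ?_
    · intro q hq
      rw [hS] at hq ⊢
      rw [← hq]
      exact Equiv.sum_comp (Equiv.swap k j) (fun i => (q i) ^ 2)
    · intro q hq
      rw [hS] at hq ⊢
      rw [← hq]
      exact Equiv.sum_comp (Equiv.swap k j) (fun i => (q i) ^ 2)
    · intro q _
      ext i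
      simp [Equiv.swap_apply_self]
    · intro q _
      ext i
      simp [Equiv.swap_apply_self]
    · intro q _
      simp [Equiv.swap_apply_left]
  -- trace computation
  have htrace : ∀ k : Fin n, (n : ℤ) * ∑ q ∈ S, (q k) ^ 2 = (m : ℤ) * S.card := by
    intro k
    have h1 : ∑ j : Fin n, ∑ q ∈ S, (q j) ^ 2 = (n : ℤ) * ∑ q ∈ S, (q k) ^ 2 := by
      rw [Finset.sum_congr rfl fun j _ => hdiag j k]
      simp [mul_comm]
    have h2 : ∑ j : Fin n, ∑ q ∈ S, (q j) ^ 2 = (m : ℤ) * S.card := by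
      rw [Finset.sum_comm]
      rw [Finset.sum_congr rfl fun q hq => (hS q).mp hq]
      simp [mul_comm]
    rw [← h1, h2]
  -- key diagonal identity over Q
  have hdiagQ : ∀ k : Fin n, (n : ℤ) * ∑ q ∈ Q, (q k) ^ 2 = (m : ℤ) * Q.card := by
    intro k
    have := htrace k
    rw [hsum2 (fun q => (q k) ^ 2) (fun q => by simp), hcardS] at this
    push_cast at this
    linarith
  have hoffQ : ∀ k j : Fin n, k ≠ j → ∑ q ∈ Q, q k * q j = 0 := by
    intro k j hkj
    have := hoff k j hkj
    rw [hsum2 (fun q => q k * q j) (fun q => by simp)] at this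
    linarith
  -- conclude
  ext k j
  rw [Matrix.sum_apply]
  simp only [Matrix.smul_apply, Matrix.one_apply, Matrix.of_apply, smul_eq_mul]
  by_cases hkj : k = j
  · subst hkj
    simp only [if_pos rfl, mul_one]
    have h := hdiagQ k
    have : ((n : ℝ)) * ∑ q ∈ Q, ((q k : ℝ) * (q k)) = (m : ℝ) * Q.card := by
      have := congrArg (fun z : ℤ => (z : ℝ)) h
      push_cast at this
      convert this using 2
      · exact Finset.sum_congr rfl fun q _ => by ring
    field_simp
    simp only [↓reduceIte, mul_one, sq]
    linarith
  · simp only [if_neg hkj, mul_zero]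
    have h := hoffQ k j hkj
    have : ((∑ q ∈ Q, q k * q j : ℤ) : ℝ) = 0 := by rw [h]; simp
    push_cast at this
    convert this using 1
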